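/- Cardinality factorization of the cycle space: for any E ⊆ E(𝓛) with Ē = E(𝓛) \ E, the cycle space of the full lattice factorizes as |𝒵| = |𝒮| · |𝒵(E)| · |𝒵(Ē)|, where 𝒮 = 𝒮(E) ∩ 𝒮(Ē) is the common syndrome space and 𝒵(E), 𝒵(Ē) are the cycle spaces on E and Ē respectively. -/
import Mathlib


open Finset

/-- Edges of the L×L square lattice: `horiz i j` is the edge from (i,j) to (i+1,j),
`vert i j` is the edge from (i,j) to (i,j+1). -/
inductive Edge (L : ℕ) where
  | horiz : Fin L → Fin (L+1) → Edge L
  | vert  : Fin (L+1) → Fin L → Edge L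
deriving DecidableEq, Fintype

/-- Vertices of the L×L square lattice. -/
abbrev Vertex (L : ℕ) := Fin (L+1) × Fin (L+1)

/-- The two endpoints of an edge. -/
def Edge.ends {L : ℕ} : Edge L → Vertex L × Vertex L
  | .horiz i j => ((i.castSucc, j), (i.succ, j))
  | .vert i j  => ((i, j.castSucc), (i, j.succ))

/-- A vertex is incident to an edge iff it is one of its endpoints. -/
def Incident {L : ℕ} (s : Vertex L) (e : Edge L) : Prop :=
  s = e.ends.1 ∨ s = e.ends.2

instance {L : ℕ} (s : Vertex L) (e : Edge L) : Decidable (Incident s e) := by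
  unfold Incident; infer_instance

/-- The star δs: the set of edges incident to a vertex s. -/
def star {L : ℕ} (s : Vertex L) : Finset (Edge L) :=
  Finset.univ.filter (fun e => Incident s e)

/-- The boundary ∂p of the plaquette p = (i,j): the four edges of the unit square
with corners (i,j), (i+1,j), (i,j+1), (i+1,j+1). -/
def pBoundary {L : ℕ} (p : Fin L × Fin L) : Finset (Edge L) :=
  {Edge.horiz p.1 p.2.castSucc, Edge.horiz p.1 p.2.succ,
   Edge.vert p.1.castSucc p.2, Edge.vert p.1.succ p.2}


/-- The boundary of a 1-chain x : E(𝓛) → ZMod 2 is the 0-chain ∂x with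
(∂x)_s = ∑_{e ∈ δs} x_e. -/
def bd {L : ℕ} (x : Edge L → ZMod 2) : Vertex L → ZMod 2 :=
  fun s => ∑ e ∈ star s, x e

/-- The restriction of a 1-chain to a subset E of edges, extended by zero. -/
def restrict {L : ℕ} (E : Finset (Edge L)) (x : Edge L → ZMod 2) : Edge L → ZMod 2 :=
  fun e => if e ∈ E then x e else 0

/-- ∂E: the set of vertices incident both to an edge of E and to an edge of the
complement Ē = E(𝓛) \ E. -/
def bdryV {L : ℕ} (E : Finset (Edge L)) : Finset (Vertex L) :=
  Finset.univ.filter (fun s => (∃ e ∈ E, Incident s e) ∧ (∃ e ∈ Eᶜ, Incident s e))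

/-- A relative 1-cycle on E with respect to a set B of vertices: a 1-chain supported on
E whose boundary vanishes outside B. `IsRelCycle E (bdryV E) x` says x ∈ 𝒵(E,∂E). -/
def IsRelCycle {L : ℕ} (E : Finset (Edge L)) (B : Finset (Vertex L))
    (x : Edge L → ZMod 2) : Prop :=
  (∀ e ∉ E, x e = 0) ∧ ∀ s ∉ B, bd x s = 0

/-- The syndrome space 𝒮(E): the set of boundaries of relative 1-cycles in 𝒵(E,∂E). -/
def syndromes {L : ℕ} (E : Finset (Edge L)) : Set (Vertex L → ZMod 2) :=
  {u | ∃ z : Edge L → ZMod 2, IsRelCycle E (bdryV E) z ∧ bd z = u}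

section Aux

variable {L : ℕ}

lemma mem_star_iff {s : Vertex L} {e : Edge L} : e ∈ _root_.star s ↔ Incident s e := by
  simp [_root_.star]

/-- bd as a linear map. -/
def bdL (L : ℕ) : (Edge L → ZMod 2) →ₗ[ZMod 2] (Vertex L → ZMod 2) where
  toFun := bd
  map_add' x y := by funext s; simp [bd, Finset.sum_add_distrib]
  map_smul' c x := by funext s; simp [bd, Finset.mul_sum]

/-- restrict as a linear map. -/
def resL (E : Finset (Edge L)) : (Edge L → ZMod 2) →ₗ[ZMod 2] (Edge L → ZMod 2) where
  toFun := _root_.restrict E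
  map_add' x y := by funext e; by_cases h : e ∈ E <;> simp [_root_.restrict, h]
  map_smul' c x := by funext e; by_cases h : e ∈ E <;> simp [_root_.restrict, h]

lemma restrict_add_restrict_compl (E : Finset (Edge L)) (x : Edge L → ZMod 2) :
    _root_.restrict E x + _root_.restrict Eᶜ x = x := by
  funext e
  by_cases h : e ∈ E <;> simp [_root_.restrict, h]

lemma restrict_isRelCycle (E : Finset (Edge L)) (x : Edge L → ZMod 2) (hx : bd x = 0) :
    IsRelCycle E (bdryV E) (_root_.restrict E x) := by
  refine ⟨fun e he => by simp [_root_.restrict, he], fun s hs => ?_⟩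
  simp only [bdryV, Finset.mem_filter, Finset.mem_univ, true_and, not_and_or] at hs
  push_neg at hs
  rcases hs with h | h
  · exact Finset.sum_eq_zero fun e he => by
      have he' : e ∉ E := fun hE => h e hE (mem_star_iff.mp he)
      simp [_root_.restrict, he']
  · have key : ∀ e ∈ _root_.star s, _root_.restrict E x e = x e := by
      intro e he
      have he' : e ∈ E := by
        by_contra hE
        exact h e (Finset.mem_compl.mpr hE) (mem_star_iff.mp he)
      simp [_root_.restrict, he']
    calc bd (_root_.restrict E x) s = ∑ e ∈ _root_.star s, x e :=
          Finset.sum_congr rfl key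
      _ = 0 := congrFun hx s

lemma bd_restrict_compl (E : Finset (Edge L)) (x : Edge L → ZMod 2) (hx : bd x = 0) :
    bd (_root_.restrict Eᶜ x) = bd (_root_.restrict E x) := by
  have h1 : bd (_root_.restrict E x) + bd (_root_.restrict Eᶜ x) = 0 := by
    have h2 := congrArg bd (restrict_add_restrict_compl E x)
    rw [show bd (_root_.restrict E x + _root_.restrict Eᶜ x)
        = bd (_root_.restrict E x) + bd (_root_.restrict Eᶜ x) from
      (bdL L).map_add _ _] at h2
    rw [h2, hx]
  funext s
  have h3 := congrFun h1 s
  have h4 : bd (_root_.restrict E x) s = - bd (_root_.restrict Eᶜ x) s := by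
    rw [eq_neg_iff_add_eq_zero]; exact h3
  rw [h4, CharTwo.neg_eq]

lemma restrict_add_left (E : Finset (Edge L)) (y z : Edge L → ZMod 2)
    (hy : ∀ e ∉ E, y e = 0) (hz : ∀ e ∉ Eᶜ, z e = 0) :
    _root_.restrict E (y + z) = y := by
  funext e
  by_cases h : e ∈ E
  · have hz' : z e = 0 := hz e (by simp [Finset.mem_compl, h])
    simp [_root_.restrict, h, hz']
  · simp [_root_.restrict, h, (hy e h).symm]

lemma restrict_add_right (E : Finset (Edge L)) (y z : Edge L → ZMod 2)
    (hy : ∀ e ∉ E, y e = 0) (hz : ∀ e ∉ Eᶜ, z e = 0) :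
    _root_.restrict Eᶜ (y + z) = z := by
  funext e
  by_cases h : e ∈ Eᶜ
  · have hy' : y e = 0 := hy e (Finset.mem_compl.mp h)
    simp [_root_.restrict, h, hy']
  · simp [_root_.restrict, h, (hz e h).symm]

end Aux

/-- cardinality factorization of the cycle space: for any subset E of
edges, |𝒵| = |𝒮|·|𝒵(E)|·|𝒵(Ē)|, where 𝒮 = 𝒮(E) ∩ 𝒮(Ē) is the common syndrome space
and 𝒵(E), 𝒵(Ē) are the cycle spaces of 1-chains supported on E, Ē respectively. -/
theorem cycle_space_cardinality_factorization (L : ℕ) (hL : 1 ≤ L)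
    (E : Finset (Edge L)) :
    Nat.card {x : Edge L → ZMod 2 // bd x = 0}
      = Nat.card (syndromes E ∩ syndromes Eᶜ : Set (Vertex L → ZMod 2)) *
        Nat.card {x : Edge L → ZMod 2 // (∀ e ∉ E, x e = 0) ∧ bd x = 0} *
        Nat.card {x : Edge L → ZMod 2 // (∀ e ∉ Eᶜ, x e = 0) ∧ bd x = 0} := by
  classical
  set Z := LinearMap.ker (bdL L) with hZdef
  let φ : Z →ₗ[ZMod 2] (Vertex L → ZMod 2) := ((bdL L) ∘ₗ (resL E)).domRestrict Z
  have hφ : ∀ x : Z, φ x = bd (_root_.restrict E (x : Edge L → ZMod 2)) := fun x => rfl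
  have hbdZ : ∀ x : Z, bd (x : Edge L → ZMod 2) = 0 := fun x => x.2
  -- the range of φ is the common syndrome space
  have hrange : ∀ u, u ∈ LinearMap.range φ ↔ u ∈ (syndromes E ∩ syndromes Eᶜ : Set _) := by
    intro u
    constructor
    · rintro ⟨x, rfl⟩
      rw [hφ]
      refine ⟨⟨_root_.restrict E x, restrict_isRelCycle E x (hbdZ x), rfl⟩,
        ⟨_root_.restrict Eᶜ x, restrict_isRelCycle Eᶜ x (hbdZ x),
          bd_restrict_compl E x (hbdZ x)⟩⟩
    · rintro ⟨⟨z1, hz1, hz1u⟩, ⟨z2, hz2, hz2u⟩⟩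
      have hbd : bd (z1 + z2) = 0 := by
        rw [show bd (z1 + z2) = bd z1 + bd z2 from (bdL L).map_add _ _, hz1u, hz2u]
        funext s; exact CharTwo.add_self_eq_zero _
      refine ⟨⟨z1 + z2, LinearMap.mem_ker.mpr hbd⟩, ?_⟩
      rw [hφ, restrict_add_left E z1 z2 hz1.1 hz2.1, hz1u]
  -- the kernel of φ is equivalent to the product of the two cycle spaces
  have keq : ↥(LinearMap.ker φ) ≃
      ({x : Edge L → ZMod 2 // (∀ e ∉ E, x e = 0) ∧ bd x = 0} ×
       {x : Edge L → ZMod 2 // (∀ e ∉ Eᶜ, x e = 0) ∧ bd x = 0}) := by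
    refine
      { toFun := fun w =>
          (⟨_root_.restrict E (w.1 : Edge L → ZMod 2),
            fun e he => by simp [_root_.restrict, he],
            by have := w.2; rw [LinearMap.mem_ker, hφ] at this; exact this⟩,
           ⟨_root_.restrict Eᶜ (w.1 : Edge L → ZMod 2),
            fun e he => by simp [_root_.restrict, he],
            by
              have h2 := w.2; rw [LinearMap.mem_ker, hφ] at h2
              rw [bd_restrict_compl E _ (hbdZ w.1)]; exact h2⟩)
        invFun := fun p =>
          ⟨⟨p.1.1 + p.2.1, LinearMap.mem_ker.mpr (by
              show bd (p.1.1 + p.2.1) = 0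
              rw [show bd (p.1.1 + p.2.1) = bd p.1.1 + bd p.2.1 from (bdL L).map_add _ _,
                p.1.2.2, p.2.2.2, add_zero])⟩,
            LinearMap.mem_ker.mpr (by
              rw [hφ]
              show bd (_root_.restrict E (p.1.1 + p.2.1)) = 0
              rw [restrict_add_left E p.1.1 p.2.1 p.1.2.1 p.2.2.1, p.1.2.2])⟩
        left_inv := fun w => by
          ext
          exact congrFun (restrict_add_restrict_compl E (w.1 : Edge L → ZMod 2)) _
        right_inv := fun p => by
          ext e
          · exact congrFun (restrict_add_left E p.1.1 p.2.1 p.1.2.1 p.2.2.1) e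
          · exact congrFun (restrict_add_right E p.1.1 p.2.1 p.1.2.1 p.2.2.1) e }
  calc Nat.card {x : Edge L → ZMod 2 // bd x = 0}
      = Nat.card Z :=
        Nat.card_congr (Equiv.subtypeEquivRight (fun x => Iff.rfl))
    _ = Nat.card (LinearMap.ker φ) * Nat.card (Z ⧸ LinearMap.ker φ) :=
        Submodule.card_eq_card_quotient_mul_card (LinearMap.ker φ)
    _ = (Nat.card {x : Edge L → ZMod 2 // (∀ e ∉ E, x e = 0) ∧ bd x = 0} *
          Nat.card {x : Edge L → ZMod 2 // (∀ e ∉ Eᶜ, x e = 0) ∧ bd x = 0}) *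
        Nat.card (syndromes E ∩ syndromes Eᶜ : Set (Vertex L → ZMod 2)) := by
        rw [Nat.card_congr keq, Nat.card_prod,
          Nat.card_congr φ.quotKerEquivRange.toEquiv,
          Nat.card_congr (Equiv.subtypeEquivRight hrange)]
    _ = _ := by ring
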